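/- Let E be a real inner product space, X ⊆ E a nonempty closed convex set, and h : E → ℝ a convex function that is 1-strongly convex on X (h(λa+(1−λ)b) ≤ λh(a)+(1−λ)h(b) − (λ(1−λ)/2)‖a−b‖² for all a,b ∈ X and λ ∈ [0,1]). Let y ∈ E and let x ∈ X attain the maximum over X of p ↦ ⟨y,p⟩ − h(p), and suppose h is differentiable at x with gradient g. Then for every p ∈ X: h(p) + (⟨y,x⟩ − h(x)) − ⟨y,p⟩ ≥ h(p) − h(x) − ⟨g, p − x⟩ ≥ (1/2)·‖p − x‖². (That is, the Fenchel coupling F(p,y) dominates the Bregman divergence D(p,x), which in turn dominates half the squared distance.) -/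

import Mathlib

open scoped RealInnerProductSpace

/-- Lemma 4: the Fenchel coupling dominates the Bregman divergence, which dominates half
the squared distance.  Here `x` attains the maximum of `p ↦ ⟪y, p⟫ - h p` over `X` and
`g` is the gradient of `h` at `x`. -/
theorem fenchel_ge_bregman_ge_half_sq_dist
    {E : Type*} [NormedAddCommGroup E] [InnerProductSpace ℝ E]
    (X : Set E) (hXne : X.Nonempty) (hXcl : IsClosed X) (hXcv : Convex ℝ X)
    (h : E → ℝ) (hconv : ConvexOn ℝ Set.univ h) (hstrong : StrongConvexOn X 1 h)
    (y x : E) (hx : x ∈ X)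
    (hmax : ∀ p ∈ X, ⟪y, p⟫ - h p ≤ ⟪y, x⟫ - h x)
    (g : E) (hgrad : HasFDerivAt h (innerSL ℝ g) x) :
    ∀ p ∈ X,
      h p - h x - ⟪g, p - x⟫ ≤ h p + (⟪y, x⟫ - h x) - ⟪y, p⟫ ∧
        (1 / 2) * ‖p - x‖ ^ 2 ≤ h p - h x - ⟪g, p - x⟫ := by
  intro p hp
  set v := p - x with hv
  -- membership of the segment
  have hmem : ∀ t ∈ Set.Ioo (0:ℝ) 1, x + t • v ∈ X := by
    intro t ht
    have := hXcv hx hp (a := 1 - t) (b := t) (by linarith [ht.2]) ht.1.le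
      (by ring)
    convert this using 1
    rw [hv]; module
  -- derivative of t ↦ h (x + t • v) at 0
  have hc : HasDerivAt (fun t : ℝ => x + t • v) v 0 := by
    simpa using ((hasDerivAt_id (0:ℝ)).smul_const v).const_add x
  have hx0 : x + (0:ℝ) • v = x := by simp
  have hf : HasDerivAt (fun t : ℝ => h (x + t • v)) ⟪g, v⟫ 0 := by
    have := (hx0 ▸ hgrad).comp_hasDerivAt 0 hc
    exact (by simpa using this : HasDerivAt (h ∘ fun t : ℝ => x + t • v) ⟪g, v⟫ 0)
  have hslope : Filter.Tendsto (slope (fun t : ℝ => h (x + t • v)) 0)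
      (nhdsWithin 0 (Set.Ioi 0)) (nhds ⟪g, v⟫) :=
    (hasDerivAt_iff_tendsto_slope.mp hf).mono_left
      (nhdsWithin_mono 0 (fun t ht => ne_of_gt ht))
  have hIoo : Set.Ioo (0:ℝ) 1 ∈ nhdsWithin (0:ℝ) (Set.Ioi 0) :=
    Ioo_mem_nhdsGT_of_mem ⟨le_refl 0, one_pos⟩
  -- first: ⟪y, v⟫ ≤ ⟪g, v⟫
  have h1 : ⟪y, v⟫ ≤ ⟪g, v⟫ := by
    refine ge_of_tendsto hslope ?_
    filter_upwards [hIoo] with t ht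
    have hmax' := hmax _ (hmem t ht)
    have hin : ⟪y, x + t • v⟫ = ⟪y, x⟫ + t * ⟪y, v⟫ := by
      rw [inner_add_right, real_inner_smul_right]
    rw [slope_def_field, sub_zero, le_div_iff₀ ht.1]
    simp only [hx0]
    rw [hin] at hmax'
    nlinarith [ht.1]
  -- second: ⟪g, v⟫ ≤ h p - h x - (1/2) * ‖v‖^2
  have h2 : ⟪g, v⟫ ≤ h p - h x - (1/2) * ‖v‖ ^ 2 := by
    have hbnd : Filter.Tendsto
        (fun t : ℝ => (h p - h x) - (1 - t) * ((1:ℝ)/2 * ‖v‖ ^ 2))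
        (nhdsWithin 0 (Set.Ioi 0)) (nhds (h p - h x - (1/2) * ‖v‖ ^ 2)) := by
      have hcont : Continuous
          (fun t : ℝ => (h p - h x) - (1 - t) * ((1:ℝ)/2 * ‖v‖ ^ 2)) := by
        continuity
      have := (hcont.tendsto 0).mono_left
        (nhdsWithin_le_nhds (s := Set.Ioi (0:ℝ)))
      simpa using this
    refine le_of_tendsto_of_tendsto hslope hbnd ?_
    filter_upwards [hIoo] with t ht
    have hsc := hstrong.2 hx hp (by linarith [ht.2] : (0:ℝ) ≤ 1 - t) ht.1.le
      (by ring)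
    have hxp : ‖x - p‖ = ‖v‖ := by rw [hv, norm_sub_rev]
    have heq : (1 - t) • x + t • p = x + t • v := by rw [hv]; module
    rw [heq, hxp] at hsc
    simp only [smul_eq_mul] at hsc
    rw [slope_def_field, sub_zero, div_le_iff₀ ht.1]
    simp only [hx0]
    nlinarith [ht.1, ht.2]
  have hyp : ⟪y, p⟫ = ⟪y, x⟫ + ⟪y, v⟫ := by
    rw [hv, inner_sub_right]; ring
  exact ⟨by linarith, by linarith⟩
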